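/- For every N ≥ 1 and π ∈ S^M, the truncated value function satisfies V₀(π) ≤ V₀^N(π) ≤ V₀(π) + (‖h‖²/c + ‖h‖/p)·(1/N), where ‖h‖ = sup_{π∈S^M}|h(π)|. In particular V₀^N converges to V₀ uniformly on S^M at rate O(1/N). -/

import Mathlib

set_option linter.unusedSectionVars false


open MeasureTheory Filter

/-- `D_i(π,x)`. -/
noncomputable def Dcoef {E : Type*} {M : ℕ} (p : ℝ) (ν : Fin (M + 1) → ℝ)
    (f : Fin (M + 1) → E → ℝ) (π : Fin (M + 1) → ℝ) (x : E) (i : Fin (M + 1)) : ℝ :=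
  if i = 0 then (1 - p) * π 0 * f 0 x else (π i + π 0 * p * ν i) * f i x

/-- `D(π,x) = Σ_{i=0}^M D_i(π,x)`. -/
noncomputable def Dtot {E : Type*} {M : ℕ} (p : ℝ) (ν : Fin (M + 1) → ℝ)
    (f : Fin (M + 1) → E → ℝ) (π : Fin (M + 1) → ℝ) (x : E) : ℝ :=
  ∑ i : Fin (M + 1), Dcoef p ν f π x i

/-- The Markov transition operator `T`:
`(Tg)(π) = ∫_E m(dx) D(π,x) g(D₀(π,x)/D(π,x), …, D_M(π,x)/D(π,x))`. -/
noncomputable def Toper {E : Type*} [MeasurableSpace E] (m : Measure E) {M : ℕ}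
    (p : ℝ) (ν : Fin (M + 1) → ℝ) (f : Fin (M + 1) → E → ℝ)
    (g : (Fin (M + 1) → ℝ) → ℝ) (π : Fin (M + 1) → ℝ) : ℝ :=
  ∫ x, Dtot p ν f π x * g (fun i => Dcoef p ν f π x i / Dtot p ν f π x) ∂m

/-- `h_j(π) = Σ_{i=0}^M π_i a_{ij}`. -/
def hj {M : ℕ} (a : Fin (M + 1) → Fin (M + 1) → ℝ) (j : Fin (M + 1))
    (π : Fin (M + 1) → ℝ) : ℝ :=
  ∑ i : Fin (M + 1), π i * a i j

/-- `h(π) = min_{j ∈ {1,…,M}} h_j(π)`. -/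
noncomputable def hfun {M : ℕ} (a : Fin (M + 1) → Fin (M + 1) → ℝ)
    (π : Fin (M + 1) → ℝ) : ℝ :=
  ⨅ j : {j : Fin (M + 1) // j ≠ 0}, hj a (j : Fin (M + 1)) π

/-- The operator `M`: `(Mf)(π) = min{h(π), c(1-π₀) + (Tf)(π)}`, with `T` the
Markov transition operator of the posterior process. -/
noncomputable def Mop {E : Type*} [MeasurableSpace E] (m : Measure E) {M : ℕ}
    (p : ℝ) (ν : Fin (M + 1) → ℝ) (f : Fin (M + 1) → E → ℝ)
    (a : Fin (M + 1) → Fin (M + 1) → ℝ) (c : ℝ)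
    (g : (Fin (M + 1) → ℝ) → ℝ) (π : Fin (M + 1) → ℝ) : ℝ :=
  min (hfun a π) (c * (1 - π 0) + Toper m p ν f g π)

noncomputable def postP {E : Type*} {M : ℕ} (p : ℝ) (ν : Fin (M + 1) → ℝ)
    (f : Fin (M + 1) → E → ℝ) (π : Fin (M + 1) → ℝ) (x : E) : Fin (M + 1) → ℝ :=
  fun i => Dcoef p ν f π x i / Dtot p ν f π x

section Aux

variable {E : Type*} [MeasurableSpace E] {m : Measure E} [SigmaFinite m]
  {M : ℕ} {p : ℝ} {ν : Fin (M + 1) → ℝ} {f : Fin (M + 1) → E → ℝ}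
  {π : Fin (M + 1) → ℝ} {g : (Fin (M + 1) → ℝ) → ℝ}

theorem Toper_eq (g : (Fin (M + 1) → ℝ) → ℝ) (π : Fin (M + 1) → ℝ) :
    Toper m p ν f g π = ∫ x, Dtot p ν f π x * g (postP p ν f π x) ∂m := rfl

theorem Dcoef_nonneg (hp0 : 0 ≤ p) (hp1 : p ≤ 1) (hν : ∀ i, 0 ≤ ν i)
    (hf0 : ∀ i x, 0 ≤ f i x) (hπ0 : ∀ i, 0 ≤ π i) (x : E) (i : Fin (M + 1)) :
    0 ≤ Dcoef p ν f π x i := by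
  unfold Dcoef
  split
  · exact mul_nonneg (mul_nonneg (by linarith) (hπ0 0)) (hf0 0 x)
  · exact mul_nonneg (add_nonneg (hπ0 i) (mul_nonneg (mul_nonneg (hπ0 0) hp0) (hν i))) (hf0 i x)

theorem Dtot_nonneg (hp0 : 0 ≤ p) (hp1 : p ≤ 1) (hν : ∀ i, 0 ≤ ν i)
    (hf0 : ∀ i x, 0 ≤ f i x) (hπ0 : ∀ i, 0 ≤ π i) (x : E) :
    0 ≤ Dtot p ν f π x :=
  Finset.sum_nonneg fun i _ => Dcoef_nonneg hp0 hp1 hν hf0 hπ0 x i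

theorem postP_mem (hp0 : 0 ≤ p) (hp1 : p ≤ 1) (hν : ∀ i, 0 ≤ ν i)
    (hf0 : ∀ i x, 0 ≤ f i x) (hπ0 : ∀ i, 0 ≤ π i) {x : E}
    (hx : 0 < Dtot p ν f π x) : postP p ν f π x ∈ stdSimplex ℝ (Fin (M + 1)) := by
  constructor
  · intro i
    exact div_nonneg (Dcoef_nonneg hp0 hp1 hν hf0 hπ0 x i) hx.le
  · rw [show ∑ i, postP p ν f π x i = (∑ i, Dcoef p ν f π x i) / Dtot p ν f π x from
      (Finset.sum_div _ _ _).symm]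
    rw [show (∑ i, Dcoef p ν f π x i) = Dtot p ν f π x from rfl]
    exact div_self hx.ne'

theorem measurable_Dcoef_x (hfmeas : ∀ i, Measurable (f i)) (i : Fin (M + 1)) :
    Measurable fun x : E => Dcoef p ν f π x i := by
  rcases eq_or_ne i 0 with h | h
  · simpa [Dcoef, h] using (hfmeas 0).const_mul _
  · simpa [Dcoef, h] using (hfmeas i).const_mul _

theorem measurable_Dtot_x (hfmeas : ∀ i, Measurable (f i)) :
    Measurable fun x : E => Dtot p ν f π x :=
  Finset.measurable_sum _ fun i _ => measurable_Dcoef_x hfmeas i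

theorem measurable_postP_x (hfmeas : ∀ i, Measurable (f i)) :
    Measurable fun x : E => postP p ν f π x :=
  measurable_pi_lambda _ fun i =>
    (measurable_Dcoef_x hfmeas i).div (measurable_Dtot_x hfmeas)

theorem measurable_Dcoef_joint (hfmeas : ∀ i, Measurable (f i)) (i : Fin (M + 1)) :
    Measurable fun z : (Fin (M + 1) → ℝ) × E => Dcoef p ν f z.1 z.2 i := by
  rcases eq_or_ne i 0 with h | h
  · simp only [Dcoef, h, if_pos]
    exact (((measurable_pi_apply 0).comp measurable_fst).const_mul _).mul
      ((hfmeas 0).comp measurable_snd)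
  · simp only [Dcoef, h, if_neg, if_false]
    exact (((measurable_pi_apply i).comp measurable_fst).add
      ((((measurable_pi_apply 0).comp measurable_fst).mul_const _).mul_const _)).mul
      ((hfmeas i).comp measurable_snd)

theorem measurable_Dtot_joint (hfmeas : ∀ i, Measurable (f i)) :
    Measurable fun z : (Fin (M + 1) → ℝ) × E => Dtot p ν f z.1 z.2 :=
  Finset.measurable_sum _ fun i _ => measurable_Dcoef_joint hfmeas i

theorem measurable_Toper (hfmeas : ∀ i, Measurable (f i)) (hg : Measurable g) :
    Measurable (Toper m p ν f g) := by
  have hj : Measurable fun z : (Fin (M + 1) → ℝ) × E =>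
      Dtot p ν f z.1 z.2 * g (postP p ν f z.1 z.2) :=
    (measurable_Dtot_joint hfmeas).mul
      (hg.comp (measurable_pi_lambda _ fun i =>
        (measurable_Dcoef_joint hfmeas i).div (measurable_Dtot_joint hfmeas)))
  exact hj.stronglyMeasurable.integral_prod_right'.measurable

theorem integrable_f (hfmeas : ∀ i, Measurable (f i)) (hfnonneg : ∀ i x, 0 ≤ f i x)
    (hfint : ∀ i, ∫⁻ x, ENNReal.ofReal (f i x) ∂m = 1) (i : Fin (M + 1)) :
    Integrable (f i) m := by
  refine ⟨(hfmeas i).aestronglyMeasurable, ?_⟩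
  have h : ∫⁻ x, ‖f i x‖ₑ ∂m = 1 := by
    rw [← hfint i]
    exact lintegral_congr fun x => Real.enorm_eq_ofReal (hfnonneg i x)
  simp only [HasFiniteIntegral, h]
  exact ENNReal.one_lt_top

theorem integral_f (hfmeas : ∀ i, Measurable (f i)) (hfnonneg : ∀ i x, 0 ≤ f i x)
    (hfint : ∀ i, ∫⁻ x, ENNReal.ofReal (f i x) ∂m = 1) (i : Fin (M + 1)) :
    ∫ x, f i x ∂m = 1 := by
  rw [integral_eq_lintegral_of_nonneg_ae (ae_of_all _ (hfnonneg i))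
    (hfmeas i).aestronglyMeasurable, hfint i, ENNReal.toReal_one]

theorem integrable_Dcoef (hfmeas : ∀ i, Measurable (f i)) (hfnonneg : ∀ i x, 0 ≤ f i x)
    (hfint : ∀ i, ∫⁻ x, ENNReal.ofReal (f i x) ∂m = 1) (i : Fin (M + 1)) :
    Integrable (fun x => Dcoef p ν f π x i) m := by
  rcases eq_or_ne i 0 with h | h
  · simpa [Dcoef, h] using ((integrable_f hfmeas hfnonneg hfint 0).const_mul _)
  · simpa [Dcoef, h] using ((integrable_f hfmeas hfnonneg hfint i).const_mul _)

theorem integral_Dcoef (hfmeas : ∀ i, Measurable (f i)) (hfnonneg : ∀ i x, 0 ≤ f i x)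
    (hfint : ∀ i, ∫⁻ x, ENNReal.ofReal (f i x) ∂m = 1) (i : Fin (M + 1)) :
    ∫ x, Dcoef p ν f π x i ∂m
      = if i = 0 then (1 - p) * π 0 else π i + π 0 * p * ν i := by
  rcases eq_or_ne i 0 with h | h
  · simp only [Dcoef, h, if_pos]
    rw [integral_const_mul, integral_f hfmeas hfnonneg hfint, mul_one]
  · simp only [Dcoef, h, if_neg, if_false]
    rw [integral_const_mul, integral_f hfmeas hfnonneg hfint, mul_one]

theorem integrable_Dtot (hfmeas : ∀ i, Measurable (f i)) (hfnonneg : ∀ i x, 0 ≤ f i x)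
    (hfint : ∀ i, ∫⁻ x, ENNReal.ofReal (f i x) ∂m = 1) :
    Integrable (fun x => Dtot p ν f π x) m := by
  simpa [Dtot] using
    integrable_finset_sum Finset.univ fun i _ => integrable_Dcoef hfmeas hfnonneg hfint i

theorem integral_Dtot (hfmeas : ∀ i, Measurable (f i)) (hfnonneg : ∀ i x, 0 ≤ f i x)
    (hfint : ∀ i, ∫⁻ x, ENNReal.ofReal (f i x) ∂m = 1)
    (hν0 : ν 0 = 0) (hνsum : ∑ i, ν i = 1)
    (hπ : π ∈ stdSimplex ℝ (Fin (M + 1))) :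
    ∫ x, Dtot p ν f π x ∂m = 1 := by
  have h1 : ∫ x, Dtot p ν f π x ∂m = ∑ i : Fin (M + 1), ∫ x, Dcoef p ν f π x i ∂m := by
    simp only [Dtot]
    exact integral_finset_sum Finset.univ fun i _ => integrable_Dcoef hfmeas hfnonneg hfint i
  rw [h1]
  have h2 : ∀ i : Fin (M + 1), ∫ x, Dcoef p ν f π x i ∂m
      = if i = 0 then (1 - p) * π 0 else π i + π 0 * p * ν i :=
    fun i => integral_Dcoef hfmeas hfnonneg hfint i
  simp only [h2]
  rw [Fin.sum_univ_succ]
  simp only [Fin.succ_ne_zero, if_neg, if_false, if_true, eq_self_iff_true]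
  have hπsum : π 0 + ∑ i : Fin M, π i.succ = 1 := by
    have := hπ.2; rwa [Fin.sum_univ_succ] at this
  have hνsum' : ∑ i : Fin M, ν i.succ = 1 := by
    rw [Fin.sum_univ_succ, hν0, zero_add] at hνsum; exact hνsum
  rw [Finset.sum_add_distrib]
  have : ∑ i : Fin M, π 0 * p * ν i.succ = π 0 * p * ∑ i : Fin M, ν i.succ := by
    rw [Finset.mul_sum]
  rw [this, hνsum']
  nlinarith [hπsum]

end Aux

/-- A bundled set of standing hypotheses. -/
structure Hyp {E : Type*} [MeasurableSpace E] (m : MeasureTheory.Measure E) {M : ℕ} (p : ℝ)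
    (ν : Fin (M + 1) → ℝ) (f : Fin (M + 1) → E → ℝ) : Prop where
  hp0 : 0 < p
  hp1 : p < 1
  hν : ∀ i, 0 ≤ ν i
  hν0 : ν 0 = 0
  hνsum : ∑ i, ν i = 1
  hfmeas : ∀ i, Measurable (f i)
  hfnonneg : ∀ i x, 0 ≤ f i x
  hfint : ∀ i, ∫⁻ x, ENNReal.ofReal (f i x) ∂m = 1

section Aux2
variable {E : Type*} [MeasurableSpace E] {m : Measure E} [SigmaFinite m]
  {M : ℕ} {p : ℝ} {ν : Fin (M + 1) → ℝ} {f : Fin (M + 1) → E → ℝ}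
  {π : Fin (M + 1) → ℝ} {g g₁ g₂ : (Fin (M + 1) → ℝ) → ℝ}

theorem Dtot_zero_coef (H : Hyp m p ν f) (hπ : π ∈ stdSimplex ℝ (Fin (M + 1))) {x : E}
    (hx : Dtot p ν f π x = 0) (i : Fin (M + 1)) : Dcoef p ν f π x i = 0 := by
  have h1 := Dcoef_nonneg H.hp0.le H.hp1.le H.hν H.hfnonneg hπ.1 (π := π) x
  have := (Finset.sum_eq_zero_iff_of_nonneg (fun i _ => h1 i)).1 hx
  exact this i (Finset.mem_univ i)

/-- pointwise description of the integrand of `Toper`. -/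
theorem integrand_cases (H : Hyp m p ν f) (hπ : π ∈ stdSimplex ℝ (Fin (M + 1))) (x : E) :
    Dtot p ν f π x = 0 ∨
      (0 < Dtot p ν f π x ∧ postP p ν f π x ∈ stdSimplex ℝ (Fin (M + 1))) := by
  rcases eq_or_lt_of_le (Dtot_nonneg H.hp0.le H.hp1.le H.hν H.hfnonneg hπ.1 (π := π) x)
    with h | h
  · exact Or.inl h.symm
  · exact Or.inr ⟨h, postP_mem H.hp0.le H.hp1.le H.hν H.hfnonneg hπ.1 h⟩

theorem integrable_Toper (H : Hyp m p ν f) (hπ : π ∈ stdSimplex ℝ (Fin (M + 1)))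
    (hg : Measurable g) {B : ℝ}
    (hB : ∀ σ ∈ stdSimplex ℝ (Fin (M + 1)), |g σ| ≤ B) (hB0 : 0 ≤ B) :
    Integrable (fun x => Dtot p ν f π x * g (postP p ν f π x)) m := by
  refine Integrable.mono' (g := fun x => B * Dtot p ν f π x)
    ((integrable_Dtot H.hfmeas H.hfnonneg H.hfint).const_mul B)
    ((measurable_Dtot_x H.hfmeas).mul
      (hg.comp (measurable_postP_x H.hfmeas))).aestronglyMeasurable
    (ae_of_all _ fun x => ?_)
  rcases integrand_cases H hπ x with h | ⟨h, hmem⟩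
  · simp [h, hB0]
  · rw [Real.norm_eq_abs, abs_mul, abs_of_pos h]
    calc Dtot p ν f π x * |g (postP p ν f π x)| ≤ Dtot p ν f π x * B :=
          mul_le_mul_of_nonneg_left (hB _ hmem) h.le
      _ = B * Dtot p ν f π x := mul_comm _ _

theorem Toper_nonneg (H : Hyp m p ν f) (hπ : π ∈ stdSimplex ℝ (Fin (M + 1)))
    (hg : ∀ σ ∈ stdSimplex ℝ (Fin (M + 1)), 0 ≤ g σ) : 0 ≤ Toper m p ν f g π := by
  rw [Toper_eq]
  refine integral_nonneg fun x => ?_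
  rcases integrand_cases H hπ x with h | ⟨h, hmem⟩
  · simp [h]
  · exact mul_nonneg h.le (hg _ hmem)

theorem Toper_mono_of_nonneg (H : Hyp m p ν f) (hπ : π ∈ stdSimplex ℝ (Fin (M + 1)))
    (hg₂ : Measurable g₂) {B : ℝ}
    (hB : ∀ σ ∈ stdSimplex ℝ (Fin (M + 1)), |g₂ σ| ≤ B) (hB0 : 0 ≤ B)
    (h₀ : ∀ σ ∈ stdSimplex ℝ (Fin (M + 1)), 0 ≤ g₁ σ)
    (hle : ∀ σ ∈ stdSimplex ℝ (Fin (M + 1)), g₁ σ ≤ g₂ σ) :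
    Toper m p ν f g₁ π ≤ Toper m p ν f g₂ π := by
  rw [Toper_eq, Toper_eq]
  refine integral_mono_of_nonneg (ae_of_all _ fun x => ?_)
    (integrable_Toper H hπ hg₂ hB hB0) (ae_of_all _ fun x => ?_)
  · rcases integrand_cases H hπ x with h | ⟨h, hmem⟩
    · simp [h]
    · exact mul_nonneg h.le (h₀ _ hmem)
  · rcases integrand_cases H hπ x with h | ⟨h, hmem⟩
    · simp [h]
    · exact mul_le_mul_of_nonneg_left (hle _ hmem) h.le

theorem Toper_mono_of_integrable (H : Hyp m p ν f) (hπ : π ∈ stdSimplex ℝ (Fin (M + 1)))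
    (hg₁ : Measurable g₁) (hg₂ : Measurable g₂) {B₁ B₂ : ℝ}
    (hB₁ : ∀ σ ∈ stdSimplex ℝ (Fin (M + 1)), |g₁ σ| ≤ B₁) (hB₁0 : 0 ≤ B₁)
    (hB₂ : ∀ σ ∈ stdSimplex ℝ (Fin (M + 1)), |g₂ σ| ≤ B₂) (hB₂0 : 0 ≤ B₂)
    (hle : ∀ σ ∈ stdSimplex ℝ (Fin (M + 1)), g₁ σ ≤ g₂ σ) :
    Toper m p ν f g₁ π ≤ Toper m p ν f g₂ π := by
  rw [Toper_eq, Toper_eq]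
  refine integral_mono (integrable_Toper H hπ hg₁ hB₁ hB₁0)
    (integrable_Toper H hπ hg₂ hB₂ hB₂0) fun x => ?_
  rcases integrand_cases H hπ x with h | ⟨h, hmem⟩
  · simp [h]
  · exact mul_le_mul_of_nonneg_left (hle _ hmem) h.le

theorem Toper_const (H : Hyp m p ν f) (hπ : π ∈ stdSimplex ℝ (Fin (M + 1))) (b : ℝ) :
    Toper m p ν f (fun _ => b) π = b := by
  rw [Toper_eq]
  simp only [integral_mul_const]
  rw [integral_Dtot H.hfmeas H.hfnonneg H.hfint H.hν0 H.hνsum hπ, one_mul]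

theorem Toper_add (H : Hyp m p ν f) (hπ : π ∈ stdSimplex ℝ (Fin (M + 1)))
    (hg₁ : Measurable g₁) (hg₂ : Measurable g₂) {B₁ B₂ : ℝ}
    (hB₁ : ∀ σ ∈ stdSimplex ℝ (Fin (M + 1)), |g₁ σ| ≤ B₁) (hB₁0 : 0 ≤ B₁)
    (hB₂ : ∀ σ ∈ stdSimplex ℝ (Fin (M + 1)), |g₂ σ| ≤ B₂) (hB₂0 : 0 ≤ B₂) :
    Toper m p ν f (fun σ => g₁ σ + g₂ σ) π = Toper m p ν f g₁ π + Toper m p ν f g₂ π := by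
  rw [Toper_eq, Toper_eq, Toper_eq]
  rw [show (fun x => Dtot p ν f π x * (g₁ (postP p ν f π x) + g₂ (postP p ν f π x)))
      = fun x => Dtot p ν f π x * g₁ (postP p ν f π x)
          + Dtot p ν f π x * g₂ (postP p ν f π x) from funext fun x => by ring]
  exact integral_add (integrable_Toper H hπ hg₁ hB₁ hB₁0) (integrable_Toper H hπ hg₂ hB₂ hB₂0)

theorem Toper_sub (H : Hyp m p ν f) (hπ : π ∈ stdSimplex ℝ (Fin (M + 1)))
    (hg₁ : Measurable g₁) (hg₂ : Measurable g₂) {B₁ B₂ : ℝ}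
    (hB₁ : ∀ σ ∈ stdSimplex ℝ (Fin (M + 1)), |g₁ σ| ≤ B₁) (hB₁0 : 0 ≤ B₁)
    (hB₂ : ∀ σ ∈ stdSimplex ℝ (Fin (M + 1)), |g₂ σ| ≤ B₂) (hB₂0 : 0 ≤ B₂) :
    Toper m p ν f (fun σ => g₁ σ - g₂ σ) π = Toper m p ν f g₁ π - Toper m p ν f g₂ π := by
  rw [Toper_eq, Toper_eq, Toper_eq]
  rw [show (fun x => Dtot p ν f π x * (g₁ (postP p ν f π x) - g₂ (postP p ν f π x)))
      = fun x => Dtot p ν f π x * g₁ (postP p ν f π x)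
          - Dtot p ν f π x * g₂ (postP p ν f π x) from funext fun x => by ring]
  exact integral_sub (integrable_Toper H hπ hg₁ hB₁ hB₁0) (integrable_Toper H hπ hg₂ hB₂ hB₂0)

theorem Toper_const_mul (b : ℝ) (g : (Fin (M + 1) → ℝ) → ℝ) (π : Fin (M + 1) → ℝ) :
    Toper m p ν f (fun σ => b * g σ) π = b * Toper m p ν f g π := by
  rw [Toper_eq, Toper_eq, ← integral_const_mul]
  congr 1
  funext x
  ring

theorem Toper_pi0 (H : Hyp m p ν f) (hπ : π ∈ stdSimplex ℝ (Fin (M + 1))) :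
    Toper m p ν f (fun σ => σ 0) π = (1 - p) * π 0 := by
  rw [Toper_eq]
  have h1 : (fun x => Dtot p ν f π x * postP p ν f π x 0)
      = fun x => Dcoef p ν f π x 0 := by
    funext x
    rcases integrand_cases H hπ x with h | ⟨h, _⟩
    · rw [h, zero_mul, Dtot_zero_coef H hπ h 0]
    · rw [postP, mul_comm, div_mul_cancel₀ _ h.ne']
  rw [h1, integral_Dcoef H.hfmeas H.hfnonneg H.hfint 0]
  simp

/-- additivity over finite sums -/
theorem Toper_sum (H : Hyp m p ν f) (hπ : π ∈ stdSimplex ℝ (Fin (M + 1)))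
    {ι : Type*} (t : Finset ι) (G : ι → (Fin (M + 1) → ℝ) → ℝ) (B : ι → ℝ)
    (hGmeas : ∀ k, Measurable (G k))
    (hGB : ∀ k, ∀ σ ∈ stdSimplex ℝ (Fin (M + 1)), |G k σ| ≤ B k) (hB0 : ∀ k, 0 ≤ B k) :
    Toper m p ν f (fun σ => ∑ k ∈ t, G k σ) π = ∑ k ∈ t, Toper m p ν f (G k) π := by
  classical
  induction t using Finset.induction_on with
  | empty => simpa using Toper_const H hπ 0
  | insert k t hnotmem ih =>
    rw [show (fun σ => ∑ j ∈ insert k t, G j σ)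
        = fun σ => G k σ + ∑ j ∈ t, G j σ from funext fun σ => Finset.sum_insert hnotmem]
    rw [Toper_add H hπ (hGmeas k) (Finset.measurable_sum _ fun j _ => hGmeas j)
      (hGB k) (hB0 k) (B₂ := ∑ j ∈ t, B j) (fun σ hσ => ?_) (Finset.sum_nonneg fun j _ => hB0 j),
      ih, Finset.sum_insert hnotmem]
    calc |∑ j ∈ t, G j σ| ≤ ∑ j ∈ t, |G j σ| := Finset.abs_sum_le_sum_abs _ _
      _ ≤ ∑ j ∈ t, B j := Finset.sum_le_sum fun j _ => hGB j σ hσ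

end Aux2

section Aux3
variable {M : ℕ} {a : Fin (M + 1) → Fin (M + 1) → ℝ} {π : Fin (M + 1) → ℝ}

theorem coord_le_one (hπ : π ∈ stdSimplex ℝ (Fin (M + 1))) (i : Fin (M + 1)) : π i ≤ 1 := by
  have := Finset.single_le_sum (fun j _ => hπ.1 j) (Finset.mem_univ i)
  rwa [hπ.2] at this

theorem centroid_mem : (fun _ : Fin (M + 1) => (M + 1 : ℝ)⁻¹) ∈ stdSimplex ℝ (Fin (M + 1)) := by
  constructor
  · intro i; positivity
  · rw [Finset.sum_const, Finset.card_univ, Fintype.card_fin, nsmul_eq_mul]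
    push_cast
    rw [mul_inv_cancel₀]
    positivity

theorem jone (hM : 0 < M) : ∃ j : Fin (M + 1), j ≠ 0 :=
  ⟨⟨1, by omega⟩, by intro h; simpa using congrArg Fin.val h⟩

instance : ∀ {M : ℕ}, Nonempty {j : Fin (M + 1 + 1) // j ≠ 0} :=
  ⟨⟨1, by intro h; simpa using congrArg Fin.val h⟩⟩

theorem nonempty_idx (hM : 0 < M) : Nonempty {j : Fin (M + 1) // j ≠ 0} :=
  (jone hM).elim fun j hj => ⟨⟨j, hj⟩⟩

theorem hj_measurable (j : Fin (M + 1)) : Measurable (hj a j) :=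
  Finset.measurable_sum _ fun i _ => (measurable_pi_apply i).mul_const _

theorem hfun_measurable (hM : 0 < M) : Measurable (hfun a) := by
  haveI := nonempty_idx (M := M) hM
  exact Measurable.iInf fun j => hj_measurable (a := a) (j : Fin (M + 1))

theorem hj_nonneg (ha : ∀ i j, j ≠ 0 → 0 ≤ a i j) (hπ : π ∈ stdSimplex ℝ (Fin (M + 1)))
    {j : Fin (M + 1)} (hjne : j ≠ 0) : 0 ≤ hj a j π :=
  Finset.sum_nonneg fun i _ => mul_nonneg (hπ.1 i) (ha i j hjne)

theorem hfun_nonneg (hM : 0 < M) (ha : ∀ i j, j ≠ 0 → 0 ≤ a i j)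
    (hπ : π ∈ stdSimplex ℝ (Fin (M + 1))) : 0 ≤ hfun a π := by
  haveI := nonempty_idx (M := M) hM
  exact le_ciInf fun j => hj_nonneg ha hπ j.2

theorem hfun_bddBelow (ha : ∀ i j, j ≠ 0 → 0 ≤ a i j)
    (hπ : π ∈ stdSimplex ℝ (Fin (M + 1))) :
    BddBelow (Set.range fun j : {j : Fin (M + 1) // j ≠ 0} => hj a (j : Fin (M + 1)) π) := by
  refine ⟨0, ?_⟩
  rintro x ⟨j, rfl⟩
  exact hj_nonneg ha hπ j.2

theorem hfun_le_hj (ha : ∀ i j, j ≠ 0 → 0 ≤ a i j) (hπ : π ∈ stdSimplex ℝ (Fin (M + 1)))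
    (j : {j : Fin (M + 1) // j ≠ 0}) : hfun a π ≤ hj a (j : Fin (M + 1)) π :=
  ciInf_le (hfun_bddBelow ha hπ) j

/-- the sup norm of `hfun` over the simplex. -/
noncomputable def Hnorm (M : ℕ) (a : Fin (M + 1) → Fin (M + 1) → ℝ) : ℝ :=
  sSup ((fun π => |hfun a π|) '' stdSimplex ℝ (Fin (M + 1)))

theorem hfun_le_const (hM : 0 < M) (ha : ∀ i j, j ≠ 0 → 0 ≤ a i j)
    (hπ : π ∈ stdSimplex ℝ (Fin (M + 1))) :
    |hfun a π| ≤ ∑ i : Fin (M + 1), ∑ j : Fin (M + 1), |a i j| := by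
  haveI := nonempty_idx (M := M) hM
  obtain ⟨j⟩ := nonempty_idx (M := M) hM
  rw [abs_of_nonneg (hfun_nonneg hM ha hπ)]
  refine le_trans (hfun_le_hj ha hπ j) ?_
  refine le_trans (Finset.sum_le_sum fun i _ => ?_)
    (Finset.sum_le_sum fun i (_ : i ∈ Finset.univ) =>
      Finset.single_le_sum (fun k (_ : k ∈ Finset.univ) => abs_nonneg (a i k))
        (Finset.mem_univ (j : Fin (M + 1))))
  calc π i * a i (j : Fin (M + 1)) ≤ π i * |a i (j : Fin (M + 1))| :=
        mul_le_mul_of_nonneg_left (le_abs_self _) (hπ.1 i)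
    _ ≤ 1 * |a i (j : Fin (M + 1))| :=
        mul_le_mul_of_nonneg_right (coord_le_one hπ i) (abs_nonneg _)
    _ = |a i (j : Fin (M + 1))| := one_mul _

theorem bddAbove_hfun_image (hM : 0 < M) (ha : ∀ i j, j ≠ 0 → 0 ≤ a i j) :
    BddAbove ((fun π => |hfun a π|) '' stdSimplex ℝ (Fin (M + 1))) := by
  refine ⟨∑ i : Fin (M + 1), ∑ j : Fin (M + 1), |a i j|, ?_⟩
  rintro x ⟨σ, hσ, rfl⟩
  exact hfun_le_const hM ha hσ

theorem abs_hfun_le_Hnorm (hM : 0 < M) (ha : ∀ i j, j ≠ 0 → 0 ≤ a i j)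
    (hπ : π ∈ stdSimplex ℝ (Fin (M + 1))) : |hfun a π| ≤ Hnorm M a :=
  le_csSup (bddAbove_hfun_image hM ha) ⟨π, hπ, rfl⟩

theorem hfun_le_Hnorm (hM : 0 < M) (ha : ∀ i j, j ≠ 0 → 0 ≤ a i j)
    (hπ : π ∈ stdSimplex ℝ (Fin (M + 1))) : hfun a π ≤ Hnorm M a :=
  (le_abs_self _).trans (abs_hfun_le_Hnorm hM ha hπ)

theorem Hnorm_nonneg (hM : 0 < M) (ha : ∀ i j, j ≠ 0 → 0 ≤ a i j) : 0 ≤ Hnorm M a :=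
  le_trans (abs_nonneg _) (abs_hfun_le_Hnorm hM ha centroid_mem)

end Aux3

noncomputable def Vit {E : Type*} [MeasurableSpace E] (m : Measure E) {M : ℕ}
    (p : ℝ) (ν : Fin (M + 1) → ℝ) (f : Fin (M + 1) → E → ℝ)
    (a : Fin (M + 1) → Fin (M + 1) → ℝ) (c : ℝ) (N : ℕ) : (Fin (M + 1) → ℝ) → ℝ :=
  (Mop m p ν f a c)^[N] (hfun a)

noncomputable def uLim {E : Type*} [MeasurableSpace E] (m : Measure E) {M : ℕ}
    (p : ℝ) (ν : Fin (M + 1) → ℝ) (f : Fin (M + 1) → E → ℝ)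
    (a : Fin (M + 1) → Fin (M + 1) → ℝ) (c : ℝ) : (Fin (M + 1) → ℝ) → ℝ :=
  fun π => ⨅ N : ℕ, Vit m p ν f a c N π

section Core
variable {E : Type*} [MeasurableSpace E] {m : Measure E} [SigmaFinite m]
  {M : ℕ} {p : ℝ} {ν : Fin (M + 1) → ℝ} {f : Fin (M + 1) → E → ℝ}
  {a : Fin (M + 1) → Fin (M + 1) → ℝ} {c : ℝ} {π : Fin (M + 1) → ℝ}

theorem Vit_succ (N : ℕ) : Vit m p ν f a c (N + 1) = Mop m p ν f a c (Vit m p ν f a c N) :=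
  Function.iterate_succ_apply' _ _ _

theorem Mop_measurable (hM : 0 < M) (hfmeas : ∀ i, Measurable (f i))
    {g : (Fin (M + 1) → ℝ) → ℝ} (hg : Measurable g) : Measurable (Mop m p ν f a c g) :=
  (hfun_measurable hM).min
    (((measurable_const.sub (measurable_pi_apply 0)).const_mul c).add
      (measurable_Toper hfmeas hg))

theorem Vit_measurable (hM : 0 < M) (hfmeas : ∀ i, Measurable (f i)) (N : ℕ) :
    Measurable (Vit m p ν f a c N) := by
  induction N with
  | zero => exact hfun_measurable hM
  | succ N ih => rw [Vit_succ]; exact Mop_measurable hM hfmeas ih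

theorem Vit_bdd (hM : 0 < M) (H : Hyp m p ν f) (hc : 0 < c)
    (ha : ∀ i j, j ≠ 0 → 0 ≤ a i j) (N : ℕ) :
    ∀ π ∈ stdSimplex ℝ (Fin (M + 1)),
      0 ≤ Vit m p ν f a c N π ∧ Vit m p ν f a c N π ≤ Hnorm M a := by
  induction N with
  | zero =>
    intro π hπ
    exact ⟨hfun_nonneg hM ha hπ, hfun_le_Hnorm hM ha hπ⟩
  | succ N ih =>
    intro π hπ
    rw [Vit_succ]
    constructor
    · refine le_min (hfun_nonneg hM ha hπ) (add_nonneg ?_ ?_)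
      · have := coord_le_one hπ 0
        nlinarith
      · exact Toper_nonneg H hπ fun σ hσ => (ih σ hσ).1
    · exact le_trans (min_le_left _ _) (hfun_le_Hnorm hM ha hπ)

theorem abs_Vit_le (hM : 0 < M) (H : Hyp m p ν f) (hc : 0 < c)
    (ha : ∀ i j, j ≠ 0 → 0 ≤ a i j) (N : ℕ) :
    ∀ π ∈ stdSimplex ℝ (Fin (M + 1)), |Vit m p ν f a c N π| ≤ Hnorm M a := fun π hπ => by
  rw [abs_of_nonneg (Vit_bdd hM H hc ha N π hπ).1]
  exact (Vit_bdd hM H hc ha N π hπ).2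

theorem Vit_anti (hM : 0 < M) (H : Hyp m p ν f) (hc : 0 < c)
    (ha : ∀ i j, j ≠ 0 → 0 ≤ a i j) (N : ℕ) :
    ∀ π ∈ stdSimplex ℝ (Fin (M + 1)),
      Vit m p ν f a c (N + 1) π ≤ Vit m p ν f a c N π := by
  induction N with
  | zero =>
    intro π hπ
    rw [Vit_succ]
    exact min_le_left _ _
  | succ N ih =>
    intro π hπ
    have h := Toper_mono_of_nonneg (g₁ := Vit m p ν f a c (N + 1)) (π := π) H hπ
      (Vit_measurable hM H.hfmeas N) (abs_Vit_le hM H hc ha N) (Hnorm_nonneg hM ha)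
      (fun σ hσ => (Vit_bdd hM H hc ha (N + 1) σ hσ).1) (fun σ hσ => ih σ hσ)
    calc Vit m p ν f a c (N + 2) π = Mop m p ν f a c (Vit m p ν f a c (N + 1)) π := by
          rw [Vit_succ]
      _ ≤ Mop m p ν f a c (Vit m p ν f a c N) π := min_le_min le_rfl (add_le_add_right h _)
      _ = Vit m p ν f a c (N + 1) π := (congrFun (Vit_succ N) π).symm

theorem Vit_le_of_le (hM : 0 < M) (H : Hyp m p ν f) (hc : 0 < c)
    (ha : ∀ i j, j ≠ 0 → 0 ≤ a i j) {N n : ℕ} (hNn : N ≤ n) :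
    ∀ π ∈ stdSimplex ℝ (Fin (M + 1)), Vit m p ν f a c n π ≤ Vit m p ν f a c N π := by
  induction n, hNn using Nat.le_induction with
  | base => exact fun π hπ => le_rfl
  | succ n hn ih => exact fun π hπ => le_trans (Vit_anti hM H hc ha n π hπ) (ih π hπ)

theorem uLim_le_Vit (hM : 0 < M) (H : Hyp m p ν f) (hc : 0 < c)
    (ha : ∀ i j, j ≠ 0 → 0 ≤ a i j) (N : ℕ) (hπ : π ∈ stdSimplex ℝ (Fin (M + 1))) :
    uLim m p ν f a c π ≤ Vit m p ν f a c N π :=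
  ciInf_le ⟨0, by rintro x ⟨n, rfl⟩; exact (Vit_bdd hM H hc ha n π hπ).1⟩ N

theorem uLim_nonneg (hM : 0 < M) (H : Hyp m p ν f) (hc : 0 < c)
    (ha : ∀ i j, j ≠ 0 → 0 ≤ a i j) (hπ : π ∈ stdSimplex ℝ (Fin (M + 1))) :
    0 ≤ uLim m p ν f a c π :=
  le_ciInf fun n => (Vit_bdd hM H hc ha n π hπ).1

theorem uLim_le_Hnorm (hM : 0 < M) (H : Hyp m p ν f) (hc : 0 < c)
    (ha : ∀ i j, j ≠ 0 → 0 ≤ a i j) (hπ : π ∈ stdSimplex ℝ (Fin (M + 1))) :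
    uLim m p ν f a c π ≤ Hnorm M a :=
  le_trans (uLim_le_Vit hM H hc ha 0 hπ) (hfun_le_Hnorm hM ha hπ)

theorem abs_uLim_le (hM : 0 < M) (H : Hyp m p ν f) (hc : 0 < c)
    (ha : ∀ i j, j ≠ 0 → 0 ≤ a i j) :
    ∀ π ∈ stdSimplex ℝ (Fin (M + 1)), |uLim m p ν f a c π| ≤ Hnorm M a := fun π hπ => by
  rw [abs_of_nonneg (uLim_nonneg hM H hc ha hπ)]
  exact uLim_le_Hnorm hM H hc ha hπ

theorem uLim_measurable (hM : 0 < M) (hfmeas : ∀ i, Measurable (f i)) :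
    Measurable (uLim m p ν f a c) :=
  Measurable.iInf fun N => Vit_measurable hM hfmeas N

theorem uLim_tendsto (hM : 0 < M) (H : Hyp m p ν f) (hc : 0 < c)
    (ha : ∀ i j, j ≠ 0 → 0 ≤ a i j) (hπ : π ∈ stdSimplex ℝ (Fin (M + 1))) :
    Filter.Tendsto (fun N => Vit m p ν f a c N π) Filter.atTop (nhds (uLim m p ν f a c π)) :=
  tendsto_atTop_ciInf (antitone_nat_of_succ_le fun n => Vit_anti hM H hc ha n π hπ)
    ⟨0, by rintro x ⟨n, rfl⟩; exact (Vit_bdd hM H hc ha n π hπ).1⟩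

theorem uLim_fix (hM : 0 < M) (H : Hyp m p ν f) (hc : 0 < c)
    (ha : ∀ i j, j ≠ 0 → 0 ≤ a i j) (hπ : π ∈ stdSimplex ℝ (Fin (M + 1))) :
    uLim m p ν f a c π
      = min (hfun a π) (c * (1 - π 0) + Toper m p ν f (uLim m p ν f a c) π) := by
  have hT : Filter.Tendsto (fun N => Toper m p ν f (Vit m p ν f a c N) π) Filter.atTop
      (nhds (Toper m p ν f (uLim m p ν f a c) π)) := by
    simp only [Toper_eq]
    refine tendsto_integral_of_dominated_convergence
      (fun x => Hnorm M a * Dtot p ν f π x) (fun n => ?_)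
      ((integrable_Dtot H.hfmeas H.hfnonneg H.hfint).const_mul _)
      (fun n => Filter.Eventually.of_forall fun x => ?_)
      (Filter.Eventually.of_forall fun x => ?_)
    · exact ((measurable_Dtot_x H.hfmeas).mul
        ((Vit_measurable hM H.hfmeas n).comp (measurable_postP_x H.hfmeas))).aestronglyMeasurable
    · rcases integrand_cases H hπ x with h | ⟨h, hmem⟩
      · simp [h, mul_nonneg (Hnorm_nonneg hM ha)
          (Dtot_nonneg H.hp0.le H.hp1.le H.hν H.hfnonneg hπ.1 x)]
      · rw [Real.norm_eq_abs, abs_mul, abs_of_pos h]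
        calc Dtot p ν f π x * |Vit m p ν f a c n (postP p ν f π x)|
            ≤ Dtot p ν f π x * Hnorm M a :=
              mul_le_mul_of_nonneg_left (abs_Vit_le hM H hc ha n _ hmem) h.le
          _ = Hnorm M a * Dtot p ν f π x := mul_comm _ _
    · rcases integrand_cases H hπ x with h | ⟨h, hmem⟩
      · simp only [h, zero_mul]
        exact tendsto_const_nhds
      · exact (uLim_tendsto hM H hc ha hmem).const_mul _
  have h1 : Filter.Tendsto (fun N => Vit m p ν f a c (N + 1) π) Filter.atTop
      (nhds (uLim m p ν f a c π)) :=
    (uLim_tendsto hM H hc ha hπ).comp (Filter.tendsto_add_atTop_nat 1)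
  have h2 : Filter.Tendsto (fun N => Vit m p ν f a c (N + 1) π) Filter.atTop
      (nhds (min (hfun a π) (c * (1 - π 0) + Toper m p ν f (uLim m p ν f a c) π))) := by
    simp only [Vit_succ, Mop]
    exact Filter.Tendsto.min tendsto_const_nhds (Filter.Tendsto.const_add _ hT)
  exact tendsto_nhds_unique h1 h2

end Core

def GamSet {E : Type*} [MeasurableSpace E] (m : Measure E) {M : ℕ}
    (p : ℝ) (ν : Fin (M + 1) → ℝ) (f : Fin (M + 1) → E → ℝ)
    (a : Fin (M + 1) → Fin (M + 1) → ℝ) (c : ℝ) : Set (Fin (M + 1) → ℝ) :=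
  {π | hfun a π ≤ uLim m p ν f a c π}

noncomputable def Kq {E : Type*} [MeasurableSpace E] (m : Measure E) {M : ℕ}
    (p : ℝ) (ν : Fin (M + 1) → ℝ) (f : Fin (M + 1) → E → ℝ)
    (a : Fin (M + 1) → Fin (M + 1) → ℝ) (c : ℝ) (k : ℕ) : (Fin (M + 1) → ℝ) → ℝ :=
  (fun g => ((GamSet m p ν f a c)ᶜ).indicator (Toper m p ν f g))^[k] (fun _ => 1)

noncomputable def sAux {E : Type*} [MeasurableSpace E] (m : Measure E) {M : ℕ}
    (p : ℝ) (ν : Fin (M + 1) → ℝ) (f : Fin (M + 1) → E → ℝ)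
    (a : Fin (M + 1) → Fin (M + 1) → ℝ) (c : ℝ) (N : ℕ) : (Fin (M + 1) → ℝ) → ℝ :=
  (fun g => ((GamSet m p ν f a c)ᶜ).indicator
    (fun π => c * (1 - π 0) + Toper m p ν f g π))^[N] (fun _ => 0)

section Gam
variable {E : Type*} [MeasurableSpace E] {m : Measure E} [SigmaFinite m]
  {M : ℕ} {p : ℝ} {ν : Fin (M + 1) → ℝ} {f : Fin (M + 1) → E → ℝ}
  {a : Fin (M + 1) → Fin (M + 1) → ℝ} {c : ℝ} {π : Fin (M + 1) → ℝ}

theorem GamSet_meas (hM : 0 < M) (hfmeas : ∀ i, Measurable (f i)) :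
    MeasurableSet (GamSet m p ν f a c) :=
  measurableSet_le (hfun_measurable hM) (uLim_measurable hM hfmeas)

theorem uLim_eq_hfun (hM : 0 < M) (H : Hyp m p ν f) (hc : 0 < c)
    (ha : ∀ i j, j ≠ 0 → 0 ≤ a i j) (hπ : π ∈ stdSimplex ℝ (Fin (M + 1)))
    (hΓ : π ∈ GamSet m p ν f a c) : uLim m p ν f a c π = hfun a π :=
  le_antisymm (uLim_le_Vit hM H hc ha 0 hπ) hΓ

theorem uLim_eq_cont (hM : 0 < M) (H : Hyp m p ν f) (hc : 0 < c)
    (ha : ∀ i j, j ≠ 0 → 0 ≤ a i j) (hπ : π ∈ stdSimplex ℝ (Fin (M + 1)))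
    (hΓ : π ∉ GamSet m p ν f a c) :
    uLim m p ν f a c π = c * (1 - π 0) + Toper m p ν f (uLim m p ν f a c) π := by
  have hfix := uLim_fix hM H hc ha hπ
  rcases le_or_gt (hfun a π) (c * (1 - π 0) + Toper m p ν f (uLim m p ν f a c) π) with h | h
  · exact absurd (le_of_eq (hfix.trans (min_eq_left h)).symm) hΓ
  · rw [hfix, min_eq_right h.le]

theorem Kq_succ (k : ℕ) : Kq m p ν f a c (k + 1)
    = ((GamSet m p ν f a c)ᶜ).indicator (Toper m p ν f (Kq m p ν f a c k)) :=
  Function.iterate_succ_apply' _ _ _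

theorem sAux_succ (N : ℕ) : sAux m p ν f a c (N + 1)
    = ((GamSet m p ν f a c)ᶜ).indicator
        (fun π => c * (1 - π 0) + Toper m p ν f (sAux m p ν f a c N) π) :=
  Function.iterate_succ_apply' _ _ _

theorem Kq_mem (k : ℕ) (hΓ : π ∈ GamSet m p ν f a c) : Kq m p ν f a c (k + 1) π = 0 := by
  rw [Kq_succ]
  exact Set.indicator_of_notMem (by simpa using hΓ) _

theorem Kq_not_mem (k : ℕ) (hΓ : π ∉ GamSet m p ν f a c) :
    Kq m p ν f a c (k + 1) π = Toper m p ν f (Kq m p ν f a c k) π := by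
  rw [Kq_succ]
  exact Set.indicator_of_mem (by simpa using hΓ) _

theorem sAux_mem (N : ℕ) (hΓ : π ∈ GamSet m p ν f a c) : sAux m p ν f a c (N + 1) π = 0 := by
  rw [sAux_succ]
  exact Set.indicator_of_notMem (by simpa using hΓ) _

theorem sAux_not_mem (N : ℕ) (hΓ : π ∉ GamSet m p ν f a c) :
    sAux m p ν f a c (N + 1) π
      = c * (1 - π 0) + Toper m p ν f (sAux m p ν f a c N) π := by
  rw [sAux_succ]
  exact Set.indicator_of_mem (by simpa using hΓ) _

theorem Kq_measurable (hM : 0 < M) (hfmeas : ∀ i, Measurable (f i)) (k : ℕ) :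
    Measurable (Kq m p ν f a c k) := by
  induction k with
  | zero => exact measurable_const
  | succ k ih =>
    rw [Kq_succ]
    exact (measurable_Toper (m := m) hfmeas ih).indicator (GamSet_meas (m := m) (p := p) (ν := ν) (f := f) (a := a) (c := c) hM hfmeas).compl

theorem sAux_measurable (hM : 0 < M) (hfmeas : ∀ i, Measurable (f i)) (N : ℕ) :
    Measurable (sAux m p ν f a c N) := by
  induction N with
  | zero => exact measurable_const
  | succ N ih =>
    rw [sAux_succ]
    exact (((measurable_const.sub (measurable_pi_apply 0)).const_mul c).add
      (measurable_Toper (m := m) hfmeas ih)).indicator (GamSet_meas (m := m) (p := p) (ν := ν) (f := f) (a := a) (c := c) hM hfmeas).compl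

theorem Kq_bdd (hM : 0 < M) (H : Hyp m p ν f) (k : ℕ) :
    ∀ π ∈ stdSimplex ℝ (Fin (M + 1)),
      0 ≤ Kq m p ν f a c k π ∧ Kq m p ν f a c k π ≤ 1 := by
  induction k with
  | zero => exact fun π hπ => ⟨zero_le_one, le_rfl⟩
  | succ k ih =>
    intro π hπ
    by_cases hΓ : π ∈ GamSet m p ν f a c
    · rw [Kq_mem k hΓ]; exact ⟨le_rfl, zero_le_one⟩
    · rw [Kq_not_mem k hΓ]
      constructor
      · exact Toper_nonneg H hπ fun σ hσ => (ih σ hσ).1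
      · have h := Toper_mono_of_nonneg (g₁ := Kq m p ν f a c k) (g₂ := fun _ => 1) H hπ
          measurable_const (fun σ _ => by simp) zero_le_one
          (fun σ hσ => (ih σ hσ).1) (fun σ hσ => (ih σ hσ).2)
        rwa [Toper_const H hπ 1] at h

theorem abs_Kq_le (hM : 0 < M) (H : Hyp m p ν f) (k : ℕ) :
    ∀ π ∈ stdSimplex ℝ (Fin (M + 1)), |Kq m p ν f a c k π| ≤ 1 := fun π hπ => by
  rw [abs_of_nonneg (Kq_bdd hM H k π hπ).1]
  exact (Kq_bdd hM H k π hπ).2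

theorem Kq_anti (hM : 0 < M) (H : Hyp m p ν f) (k : ℕ) :
    ∀ π ∈ stdSimplex ℝ (Fin (M + 1)),
      Kq m p ν f a c (k + 1) π ≤ Kq m p ν f a c k π := by
  induction k with
  | zero =>
    intro π hπ
    have h0 : Kq m p ν f a c 0 π = 1 := rfl
    rw [h0]
    exact (Kq_bdd hM H 1 π hπ).2
  | succ k ih =>
    intro π hπ
    by_cases hΓ : π ∈ GamSet m p ν f a c
    · rw [Kq_mem (k + 1) hΓ, Kq_mem k hΓ]
    · rw [Kq_not_mem (k + 1) hΓ, Kq_not_mem k hΓ]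
      exact Toper_mono_of_nonneg H hπ (Kq_measurable hM H.hfmeas k)
        (abs_Kq_le hM H k) zero_le_one
        (fun σ hσ => (Kq_bdd hM H (k + 1) σ hσ).1) (fun σ hσ => ih σ hσ)

theorem Kq_le_of_le (hM : 0 < M) (H : Hyp m p ν f) {j l : ℕ} (hjl : j ≤ l) :
    ∀ π ∈ stdSimplex ℝ (Fin (M + 1)), Kq m p ν f a c l π ≤ Kq m p ν f a c j π := by
  induction l, hjl using Nat.le_induction with
  | base => exact fun π hπ => le_rfl
  | succ l hl ih => exact fun π hπ => le_trans (Kq_anti hM H l π hπ) (ih π hπ)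

theorem Vit_le_uLim_add (hM : 0 < M) (H : Hyp m p ν f) (hc : 0 < c)
    (ha : ∀ i j, j ≠ 0 → 0 ≤ a i j) (N : ℕ) :
    ∀ π ∈ stdSimplex ℝ (Fin (M + 1)),
      Vit m p ν f a c N π ≤ uLim m p ν f a c π + Hnorm M a * Kq m p ν f a c N π := by
  induction N with
  | zero =>
    intro π hπ
    have h1 : Vit m p ν f a c 0 π = hfun a π := rfl
    have h2 : Kq m p ν f a c 0 π = 1 := rfl
    rw [h1, h2, mul_one]
    have := uLim_nonneg hM H hc ha hπ
    have := hfun_le_Hnorm hM ha hπ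
    linarith
  | succ N ih =>
    intro π hπ
    rw [show Vit m p ν f a c (N + 1) π = Mop m p ν f a c (Vit m p ν f a c N) π from
      congrFun (Vit_succ N) π]
    by_cases hΓ : π ∈ GamSet m p ν f a c
    · have h1 : Mop m p ν f a c (Vit m p ν f a c N) π ≤ hfun a π := min_le_left _ _
      rw [← uLim_eq_hfun hM H hc ha hπ hΓ] at h1
      rw [Kq_mem N hΓ, mul_zero, add_zero]
      exact h1
    · rw [Kq_not_mem N hΓ]
      have h1 : Mop m p ν f a c (Vit m p ν f a c N) π
          ≤ c * (1 - π 0) + Toper m p ν f (Vit m p ν f a c N) π := min_le_right _ _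
      have h2 : Toper m p ν f (Vit m p ν f a c N) π
          ≤ Toper m p ν f
              (fun σ => uLim m p ν f a c σ + Hnorm M a * Kq m p ν f a c N σ) π := by
        refine Toper_mono_of_nonneg H hπ
          ((uLim_measurable hM H.hfmeas).add
            ((Kq_measurable hM H.hfmeas N).const_mul _))
          (B := Hnorm M a + Hnorm M a) (fun σ hσ => ?_)
          (by have := Hnorm_nonneg hM ha; linarith)
          (fun σ hσ => (Vit_bdd hM H hc ha N σ hσ).1) (fun σ hσ => ih σ hσ)
        refine le_trans (abs_add_le _ _) (add_le_add (abs_uLim_le hM H hc ha σ hσ) ?_)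
        rw [abs_mul, abs_of_nonneg (Hnorm_nonneg hM ha)]
        calc Hnorm M a * |Kq m p ν f a c N σ| ≤ Hnorm M a * 1 :=
              mul_le_mul_of_nonneg_left (abs_Kq_le hM H N σ hσ) (Hnorm_nonneg hM ha)
          _ = Hnorm M a := mul_one _
      have h3 : Toper m p ν f
            (fun σ => uLim m p ν f a c σ + Hnorm M a * Kq m p ν f a c N σ) π
          = Toper m p ν f (uLim m p ν f a c) π
            + Hnorm M a * Toper m p ν f (Kq m p ν f a c N) π := by
        rw [Toper_add H hπ (uLim_measurable hM H.hfmeas)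
          ((Kq_measurable hM H.hfmeas N).const_mul _)
          (abs_uLim_le hM H hc ha) (Hnorm_nonneg hM ha)
          (B₂ := Hnorm M a) (fun σ hσ => ?_) (Hnorm_nonneg hM ha),
          Toper_const_mul]
        rw [abs_mul, abs_of_nonneg (Hnorm_nonneg hM ha)]
        calc Hnorm M a * |Kq m p ν f a c N σ| ≤ Hnorm M a * 1 :=
              mul_le_mul_of_nonneg_left (abs_Kq_le hM H N σ hσ) (Hnorm_nonneg hM ha)
          _ = Hnorm M a := mul_one _
      have h4 := uLim_eq_cont hM H hc ha hπ hΓ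
      have h5 : Kq m p ν f a c (N + 1) π = Toper m p ν f (Kq m p ν f a c N) π :=
        Kq_not_mem N hΓ
      rw [Kq_not_mem N hΓ] at *
      linarith

theorem sAux_bdd (hM : 0 < M) (H : Hyp m p ν f) (hc : 0 < c)
    (ha : ∀ i j, j ≠ 0 → 0 ≤ a i j) (N : ℕ) :
    ∀ π ∈ stdSimplex ℝ (Fin (M + 1)),
      0 ≤ sAux m p ν f a c N π ∧ sAux m p ν f a c N π ≤ uLim m p ν f a c π := by
  induction N with
  | zero => exact fun π hπ => ⟨le_rfl, uLim_nonneg hM H hc ha hπ⟩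
  | succ N ih =>
    intro π hπ
    by_cases hΓ : π ∈ GamSet m p ν f a c
    · rw [sAux_mem N hΓ]
      exact ⟨le_rfl, uLim_nonneg hM H hc ha hπ⟩
    · rw [sAux_not_mem N hΓ]
      have hπ0 : c * (1 - π 0) ≥ 0 := by
        have := coord_le_one hπ 0
        nlinarith
      constructor
      · exact add_nonneg hπ0 (Toper_nonneg H hπ fun σ hσ => (ih σ hσ).1)
      · rw [uLim_eq_cont hM H hc ha hπ hΓ]
        refine add_le_add_right ?_ _
        exact Toper_mono_of_nonneg H hπ (uLim_measurable hM H.hfmeas)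
          (abs_uLim_le hM H hc ha) (Hnorm_nonneg hM ha)
          (fun σ hσ => (ih σ hσ).1) (fun σ hσ => (ih σ hσ).2)

theorem abs_sAux_le (hM : 0 < M) (H : Hyp m p ν f) (hc : 0 < c)
    (ha : ∀ i j, j ≠ 0 → 0 ≤ a i j) (N : ℕ) :
    ∀ π ∈ stdSimplex ℝ (Fin (M + 1)), |sAux m p ν f a c N π| ≤ Hnorm M a := fun π hπ => by
  rw [abs_of_nonneg (sAux_bdd hM H hc ha N π hπ).1]
  exact le_trans (sAux_bdd hM H hc ha N π hπ).2 (uLim_le_Hnorm hM H hc ha hπ)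

end Gam

section Key
variable {E : Type*} [MeasurableSpace E] {m : Measure E} [SigmaFinite m]
  {M : ℕ} {p : ℝ} {ν : Fin (M + 1) → ℝ} {f : Fin (M + 1) → E → ℝ}
  {a : Fin (M + 1) → Fin (M + 1) → ℝ} {c : ℝ} {π : Fin (M + 1) → ℝ}

theorem abs_sub_le' (x y : ℝ) : |x - y| ≤ |x| + |y| := by
  calc |x - y| = |x + -y| := by rw [sub_eq_add_neg]
    _ ≤ |x| + |-y| := abs_add_le _ _
    _ = |x| + |y| := by rw [abs_neg]

theorem abs_pow_coord_le {M : ℕ} {p : ℝ} {σ : Fin (M + 1) → ℝ} (h1p : (0:ℝ) ≤ 1 - p)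
    (hp0 : 0 < p) (hσ : σ ∈ stdSimplex ℝ (Fin (M + 1))) (k : ℕ) :
    |(1 - p) ^ k * σ 0| ≤ 1 := by
  have h1 : (1 - p) ^ k ≤ 1 := pow_le_one₀ h1p (by linarith)
  rw [abs_mul, abs_of_nonneg (pow_nonneg h1p k), abs_of_nonneg (hσ.1 0)]
  nlinarith [coord_le_one hσ 0, hσ.1 0, pow_nonneg h1p k]

theorem key_sum (hM : 0 < M) (H : Hyp m p ν f) (hc : 0 < c)
    (ha : ∀ i j, j ≠ 0 → 0 ≤ a i j) (N : ℕ) :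
    ∀ π ∈ stdSimplex ℝ (Fin (M + 1)),
      c * (∑ k ∈ Finset.range N, (Kq m p ν f a c (k + 1) π - (1 - p) ^ k * π 0))
        ≤ sAux m p ν f a c N π := by
  have h1p : (0:ℝ) ≤ 1 - p := by linarith [H.hp1]
  induction N with
  | zero =>
    intro π hπ
    simp only [Finset.range_zero, Finset.sum_empty, mul_zero]
    exact le_rfl
  | succ N ih =>
    intro π hπ
    by_cases hΓ : π ∈ GamSet m p ν f a c
    · rw [sAux_mem N hΓ]
      have hterm : ∀ k ∈ Finset.range (N + 1),
          Kq m p ν f a c (k + 1) π - (1 - p) ^ k * π 0 ≤ 0 := by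
        intro k _
        rw [Kq_mem k hΓ]
        have : 0 ≤ (1 - p) ^ k * π 0 := mul_nonneg (pow_nonneg h1p k) (hπ.1 0)
        linarith
      have hsum := Finset.sum_nonpos hterm
      calc c * (∑ k ∈ Finset.range (N + 1),
            (Kq m p ν f a c (k + 1) π - (1 - p) ^ k * π 0))
          ≤ c * 0 := mul_le_mul_of_nonneg_left hsum hc.le
        _ = 0 := mul_zero c
    · rw [sAux_not_mem N hΓ, Finset.sum_range_succ']
      simp only [zero_add, pow_zero, one_mul]
      have hK1 : Kq m p ν f a c 1 π = 1 := by
        rw [Kq_not_mem 0 hΓ]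
        rw [show Kq m p ν f a c 0 = fun _ => (1:ℝ) from rfl, Toper_const H hπ 1]
      rw [hK1]
      have hmeasG : ∀ k : ℕ, Measurable
          (fun σ : Fin (M + 1) → ℝ => Kq m p ν f a c (k + 1) σ - (1 - p) ^ k * σ 0) :=
        fun k => (Kq_measurable hM H.hfmeas (k + 1)).sub
          ((measurable_pi_apply 0).const_mul _)
      have hboundG : ∀ k : ℕ, ∀ σ ∈ stdSimplex ℝ (Fin (M + 1)),
          |Kq m p ν f a c (k + 1) σ - (1 - p) ^ k * σ 0| ≤ 2 := by
        intro k σ hσ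
        refine le_trans (abs_sub_le' _ _) ?_
        have hq := abs_Kq_le (a := a) (c := c) hM H (k + 1) σ hσ
        have hb := abs_pow_coord_le h1p H.hp0 hσ k
        linarith
      have hTG : Toper m p ν f
          (fun σ => ∑ k ∈ Finset.range N,
            (Kq m p ν f a c (k + 1) σ - (1 - p) ^ k * σ 0)) π
          = ∑ k ∈ Finset.range N,
              (Kq m p ν f a c (k + 1 + 1) π - (1 - p) ^ (k + 1) * π 0) := by
        rw [Toper_sum H hπ (Finset.range N) _ (fun _ => 2) hmeasG
          (fun k => hboundG k) (fun k => by norm_num)]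
        refine Finset.sum_congr rfl fun k _ => ?_
        rw [Toper_sub H hπ (Kq_measurable hM H.hfmeas (k + 1))
          ((measurable_pi_apply 0).const_mul _) (abs_Kq_le hM H (k + 1)) zero_le_one
          (B₂ := 1) (fun σ hσ => ?_) zero_le_one]
        · rw [← Kq_not_mem (k + 1) hΓ, Toper_const_mul, Toper_pi0 H hπ]
          ring
        · exact abs_pow_coord_le h1p H.hp0 hσ k
      have hmono : Toper m p ν f
          (fun σ => c * ∑ k ∈ Finset.range N,
            (Kq m p ν f a c (k + 1) σ - (1 - p) ^ k * σ 0)) π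
          ≤ Toper m p ν f (sAux m p ν f a c N) π := by
        refine Toper_mono_of_integrable H hπ
          ((Finset.measurable_sum _ fun k _ => hmeasG k).const_mul c)
          (sAux_measurable hM H.hfmeas N)
          (B₁ := c * (2 * N)) (fun σ hσ => ?_) (by positivity)
          (abs_sAux_le hM H hc ha N) (Hnorm_nonneg hM ha) (fun σ hσ => ih σ hσ)
        rw [abs_mul, abs_of_nonneg hc.le]
        refine mul_le_mul_of_nonneg_left ?_ hc.le
        calc |∑ k ∈ Finset.range N,
              (Kq m p ν f a c (k + 1) σ - (1 - p) ^ k * σ 0)|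
            ≤ ∑ k ∈ Finset.range N,
              |Kq m p ν f a c (k + 1) σ - (1 - p) ^ k * σ 0| :=
              Finset.abs_sum_le_sum_abs _ _
          _ ≤ ∑ _k ∈ Finset.range N, (2:ℝ) :=
              Finset.sum_le_sum fun k _ => hboundG k σ hσ
          _ = 2 * N := by rw [Finset.sum_const, Finset.card_range, nsmul_eq_mul]; ring
      have hT2 : Toper m p ν f
          (fun σ => c * ∑ k ∈ Finset.range N,
            (Kq m p ν f a c (k + 1) σ - (1 - p) ^ k * σ 0)) π
          = c * ∑ k ∈ Finset.range N,
              (Kq m p ν f a c (k + 1 + 1) π - (1 - p) ^ (k + 1) * π 0) := by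
        rw [Toper_const_mul, hTG]
      rw [hT2] at hmono
      rw [mul_add]
      linarith
  
theorem Kq_rate (hM : 0 < M) (H : Hyp m p ν f) (hc : 0 < c)
    (ha : ∀ i j, j ≠ 0 → 0 ≤ a i j) {N : ℕ} (hN : 1 ≤ N)
    (hπ : π ∈ stdSimplex ℝ (Fin (M + 1))) :
    (N : ℝ) * Kq m p ν f a c N π ≤ Hnorm M a / c + 1 / p := by
  have h1p : (0:ℝ) ≤ 1 - p := by linarith [H.hp1]
  have h1 : (N : ℝ) * Kq m p ν f a c N π
      ≤ ∑ k ∈ Finset.range N, Kq m p ν f a c (k + 1) π := by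
    have hge : ∀ k ∈ Finset.range N,
        Kq m p ν f a c N π ≤ Kq m p ν f a c (k + 1) π := fun k hk =>
      Kq_le_of_le hM H (Nat.succ_le_of_lt (Finset.mem_range.1 hk)) π hπ
    have := Finset.card_nsmul_le_sum (Finset.range N)
      (fun k => Kq m p ν f a c (k + 1) π) (Kq m p ν f a c N π) hge
    rwa [Finset.card_range, nsmul_eq_mul] at this
  have hgeom : ∑ k ∈ Finset.range N, (1 - p) ^ k ≤ 1 / p := by
    have hne : (1:ℝ) - p ≠ 1 := by
      intro h
      have : p = 0 := by linarith
      exact absurd this (ne_of_gt H.hp0)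
    rw [geom_sum_eq hne, show ((1:ℝ) - p) - 1 = -p from by ring, div_neg, ← neg_div,
      neg_sub]
    rw [div_le_div_iff₀ H.hp0 H.hp0]
    nlinarith [pow_nonneg h1p N, mul_nonneg (pow_nonneg h1p N) H.hp0.le]
  have h3 : ∑ k ∈ Finset.range N, (1 - p) ^ k * π 0 ≤ 1 / p := by
    refine le_trans (Finset.sum_le_sum fun k _ => ?_) hgeom
    calc (1 - p) ^ k * π 0 ≤ (1 - p) ^ k * 1 :=
          mul_le_mul_of_nonneg_left (coord_le_one hπ 0) (pow_nonneg h1p k)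
      _ = (1 - p) ^ k := mul_one _
  have h2 := key_sum hM H hc ha N π hπ
  rw [Finset.sum_sub_distrib, mul_sub] at h2
  have h4 : c * ∑ k ∈ Finset.range N, Kq m p ν f a c (k + 1) π
      ≤ Hnorm M a + c * (1 / p) := by
    have h5 := le_trans (sAux_bdd hM H hc ha N π hπ).2 (uLim_le_Hnorm hM H hc ha hπ)
    have h6 : c * ∑ k ∈ Finset.range N, (1 - p) ^ k * π 0 ≤ c * (1 / p) :=
      mul_le_mul_of_nonneg_left h3 hc.le
    linarith
  rw [← mul_le_mul_iff_right₀ hc, show c * (Hnorm M a / c + 1 / p)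
    = Hnorm M a + c * (1 / p) from by field_simp]
  exact le_trans (mul_le_mul_of_nonneg_left h1 hc.le) h4

end Key

/-- `V₀ ≤ V₀^N ≤ V₀ + (‖h‖²/c + ‖h‖/p)(1/N)`, so `V₀^N → V₀`
uniformly on `S^M` at rate `O(1/N)`. -/
theorem truncated_value_function_rate
    {E : Type*} [MeasurableSpace E] (m : Measure E) [SigmaFinite m]
    {M : ℕ} (hM : 0 < M)
    (p : ℝ) (hp : p ∈ Set.Ioo (0 : ℝ) 1)
    (ν : Fin (M + 1) → ℝ) (hν0 : ν 0 = 0) (hνpos : ∀ i : Fin (M + 1), i ≠ 0 → 0 < ν i)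
    (hνsum : ∑ i : Fin (M + 1), ν i = 1)
    (f : Fin (M + 1) → E → ℝ) (hfmeas : ∀ i, Measurable (f i))
    (hfnonneg : ∀ i x, 0 ≤ f i x)
    (hfint : ∀ i, ∫⁻ x, ENNReal.ofReal (f i x) ∂m = 1)
    (c : ℝ) (hc : 0 < c)
    (a : Fin (M + 1) → Fin (M + 1) → ℝ)
    (ha : ∀ (i j : Fin (M + 1)), j ≠ 0 → 0 ≤ a i j)
    (haii : ∀ j : Fin (M + 1), j ≠ 0 → a j j = 0)
    (V0 : (Fin (M + 1) → ℝ) → ℝ)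
    (hV0 : ∀ π ∈ stdSimplex ℝ (Fin (M + 1)),
      Tendsto (fun N : ℕ => (Mop m p ν f a c)^[N] (hfun a) π) atTop (nhds (V0 π))) :
    (∀ N : ℕ, 1 ≤ N → ∀ π ∈ stdSimplex ℝ (Fin (M + 1)),
      V0 π ≤ (Mop m p ν f a c)^[N] (hfun a) π ∧
        (Mop m p ν f a c)^[N] (hfun a) π
          ≤ V0 π +
            ((sSup ((fun π => |hfun a π|) '' stdSimplex ℝ (Fin (M + 1)))) ^ 2 / c
              + (sSup ((fun π => |hfun a π|) '' stdSimplex ℝ (Fin (M + 1)))) / p)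
            * (1 / (N : ℝ))) ∧
      TendstoUniformlyOn (fun (N : ℕ) (π : Fin (M + 1) → ℝ) =>
          (Mop m p ν f a c)^[N] (hfun a) π)
        V0 atTop (stdSimplex ℝ (Fin (M + 1))) := by
  have H : Hyp m p ν f := by
    refine ⟨hp.1, hp.2, fun i => ?_, hν0, hνsum, hfmeas, hfnonneg, hfint⟩
    rcases eq_or_ne i 0 with h | h
    · rw [h, hν0]
    · exact (hνpos i h).le
  have hHn := Hnorm_nonneg (a := a) hM ha
  have hUeq : ∀ π ∈ stdSimplex ℝ (Fin (M + 1)), uLim m p ν f a c π = V0 π := fun π hπ =>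
    tendsto_nhds_unique (uLim_tendsto hM H hc ha hπ) (hV0 π hπ)
  have hmain : ∀ N : ℕ, 1 ≤ N → ∀ π ∈ stdSimplex ℝ (Fin (M + 1)),
      V0 π ≤ Vit m p ν f a c N π ∧
        Vit m p ν f a c N π
          ≤ V0 π + (Hnorm M a ^ 2 / c + Hnorm M a / p) * (1 / (N : ℝ)) := by
    intro N hN π hπ
    constructor
    · refine le_of_tendsto (hV0 π hπ) ?_
      exact Filter.eventually_atTop.2 ⟨N, fun n hn => Vit_le_of_le hM H hc ha hn π hπ⟩
    · have h1 := Vit_le_uLim_add hM H hc ha N π hπ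
      have h2 := Kq_rate hM H hc ha hN hπ
      have hNpos : (0:ℝ) < N := by exact_mod_cast hN
      have h3 : Kq m p ν f a c N π ≤ (Hnorm M a / c + 1 / p) * (1 / (N : ℝ)) := by
        rw [mul_one_div, le_div_iff₀ hNpos]
        linarith
      calc Vit m p ν f a c N π
          ≤ uLim m p ν f a c π + Hnorm M a * Kq m p ν f a c N π := h1
        _ ≤ uLim m p ν f a c π
            + Hnorm M a * ((Hnorm M a / c + 1 / p) * (1 / (N : ℝ))) :=
            add_le_add_right (mul_le_mul_of_nonneg_left h3 hHn) _
        _ = V0 π + (Hnorm M a ^ 2 / c + Hnorm M a / p) * (1 / (N : ℝ)) := by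
            rw [hUeq π hπ]; ring
  refine ⟨fun N hN π hπ => hmain N hN π hπ, ?_⟩
  rw [Metric.tendstoUniformlyOn_iff]
  intro ε hε
  have hC0 : 0 ≤ Hnorm M a ^ 2 / c + Hnorm M a / p :=
    add_nonneg (div_nonneg (pow_nonneg hHn 2) hc.le) (div_nonneg hHn hp.1.le)
  have hlim : Filter.Tendsto
      (fun n : ℕ => (Hnorm M a ^ 2 / c + Hnorm M a / p) * (1 / (n : ℝ)))
      Filter.atTop (nhds 0) := by
    simpa using tendsto_one_div_atTop_nhds_zero_nat.const_mul
      (Hnorm M a ^ 2 / c + Hnorm M a / p)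
  have hev := hlim.eventually (gt_mem_nhds hε)
  filter_upwards [hev, Filter.eventually_ge_atTop 1] with n hn hn1 π hπ
  have hb := hmain n hn1 π hπ
  show dist (V0 π) (Vit m p ν f a c n π) < ε
  rw [Real.dist_eq, abs_of_nonpos (by linarith [hb.1, hb.2] : V0 π - Vit m p ν f a c n π ≤ 0)]
  linarith [hb.2]
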